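/- Let q be an odd prime power and k, l integers with 1 < l < k − 1. Then N(H̄_k^q, K_l) ≥ Σ_{i=1}^{l} (q² − 1)·q^{k−1−i}/4 = (q + 1)(q^l − 1)·q^{k−l−1}/4, where H̄_k^q is the directional complement of H_k^q and K_l is the complete digraph on l vertices (edges in both directions between any two distinct vertices). Equivalently, H̄_k^q has an induced subdigraph on at least (q + 1)(q^l − 1)·q^{k−l−1}/4 vertices that is properly l-colorable. -/

import Mathlib

/-- The standard bilinear form `⟨v,w⟩ = ∑ i, v i * w i` on `F^k`. -/
def bil {k : ℕ} {F : Type} [Field F] (v w : Fin k → F) : F := ∑ i, v i * w i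

/-- A vector is *normal* if its first nonzero entry equals `1`. -/
def IsNormal {k : ℕ} {F : Type} [Field F] (v : Fin k → F) : Prop :=
  ∃ i : Fin k, v i = 1 ∧ ∀ j : Fin k, j < i → v j = 0

/-- The vertex set `W` of the digraph `H_k^q`. -/
def IsHVertex {k : ℕ} {F : Type} [Field F] (p : (Fin k → F) × (Fin k → F)) : Prop :=
  IsNormal p.1 ∧ IsNormal p.2 ∧ bil p.1 p.2 ≠ 0

/-- The vertices of the digraph `H_k^q`. -/
abbrev HVtx (k : ℕ) (F : Type) [Field F] : Type :=
  {p : (Fin k → F) × (Fin k → F) // IsHVertex p}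

/-- The (loopless) adjacency of `H_k^q`: there is an edge from the vertex `(v,w)` to a
distinct vertex `(v',w')` iff `⟨v,w'⟩ ≠ 0`. -/
def HAdj {k : ℕ} {F : Type} [Field F] (a b : HVtx k F) : Prop :=
  a ≠ b ∧ bil a.val.1 b.val.2 ≠ 0

/-- The directional complement of a loopless digraph: for distinct vertices `a, b`,
`(a,b)` is an edge iff it is not an edge of the original digraph. -/
def digraphCompl {V : Type*} (G : V → V → Prop) : V → V → Prop :=
  fun a b => a ≠ b ∧ ¬ G a b
/-- `Nhom L K` is the maximum number of vertices of an induced subdigraph `L'` of `L`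
(given by a subset `S` of the vertices of `L` with the restricted adjacency) such that
there exists a homomorphism from `L'` to `K`. -/
noncomputable def Nhom {VL VK : Type*} (L : VL → VL → Prop) (K : VK → VK → Prop) : ℕ :=
  sSup {n | ∃ S : Set VL,
    (∃ f : S → VK, ∀ x y : S, L x.val y.val → K (f x) (f y)) ∧ Nat.card S = n}

section Construction

variable {k : ℕ} {F : Type} [Field F]

def mkv (k : ℕ) (F : Type) [Field F] (n : ℕ) (s : F) : Fin k → F :=
  fun j => if (j : ℕ) = n then 1 else if (j : ℕ) = n + 1 then s else 0

def mkw (k : ℕ) (F : Type) [Field F] (n : ℕ) (b : F) (t : Fin (k - 2 - n) → F) :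
    Fin k → F :=
  fun j => if (j : ℕ) = n then 1 else if (j : ℕ) = n + 1 then b
    else if h : n + 2 ≤ (j : ℕ) then t ⟨(j : ℕ) - (n + 2), by have := j.isLt; omega⟩ else 0

lemma mkv_at_n {n : ℕ} (hn : n < k) (s : F) : mkv k F n s ⟨n, hn⟩ = 1 := by simp [mkv]

lemma mkv_at_n1 {n : ℕ} (hn : n + 1 < k) (s : F) : mkv k F n s ⟨n + 1, hn⟩ = s := by
  simp [mkv]

lemma mkv_eq_zero {n : ℕ} (s : F) (j : Fin k) (h1 : (j : ℕ) ≠ n) (h2 : (j : ℕ) ≠ n + 1) :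
    mkv k F n s j = 0 := by simp [mkv, h1, h2]

lemma mkw_at_n {n : ℕ} (hn : n < k) (b : F) (t : Fin (k - 2 - n) → F) :
    mkw k F n b t ⟨n, hn⟩ = 1 := by simp [mkw]

lemma mkw_at_n1 {n : ℕ} (hn : n + 1 < k) (b : F) (t : Fin (k - 2 - n) → F) :
    mkw k F n b t ⟨n + 1, hn⟩ = b := by simp [mkw]

lemma mkw_at_tail {n m : ℕ} (hm : n + 2 + m < k) (b : F) (t : Fin (k - 2 - n) → F) :
    mkw k F n b t ⟨n + 2 + m, hm⟩ = t ⟨m, by omega⟩ := by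
  simp only [mkw]
  rw [if_neg (by omega), if_neg (by omega), dif_pos (by omega)]
  congr 1
  apply Fin.ext
  simp
  try omega

lemma mkw_eq_zero_of_lt {n : ℕ} (b : F) (t : Fin (k - 2 - n) → F) (j : Fin k)
    (hj : (j : ℕ) < n) : mkw k F n b t j = 0 := by
  simp only [mkw]
  rw [if_neg (by omega), if_neg (by omega), dif_neg (by omega)]

lemma isNormal_mkv {n : ℕ} (hn : n < k) (s : F) : IsNormal (mkv k F n s) :=
  ⟨⟨n, hn⟩, mkv_at_n hn s, fun j hj => by
    have h2 : (j : ℕ) < n := hj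
    exact mkv_eq_zero s j (by omega) (by omega)⟩

lemma isNormal_mkw {n : ℕ} (hn : n < k) (b : F) (t : Fin (k - 2 - n) → F) :
    IsNormal (mkw k F n b t) :=
  ⟨⟨n, hn⟩, mkw_at_n hn b t, fun j hj => mkw_eq_zero_of_lt b t j hj⟩

lemma bil_mkv {n : ℕ} (hn : n + 1 < k) (s : F) (w : Fin k → F) :
    bil (mkv k F n s) w = w ⟨n, by omega⟩ + s * w ⟨n + 1, hn⟩ := by
  have hne : (⟨n, by omega⟩ : Fin k) ≠ ⟨n + 1, hn⟩ := by simp [Fin.ext_iff]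
  unfold bil
  rw [← Finset.sum_subset (Finset.subset_univ ({⟨n, by omega⟩, ⟨n + 1, hn⟩} : Finset (Fin k)))]
  · rw [Finset.sum_pair hne, mkv_at_n (by omega), mkv_at_n1 hn, one_mul]
  · intro x _ hx
    simp only [Finset.mem_insert, Finset.mem_singleton] at hx
    push_neg at hx
    rw [mkv_eq_zero s x (fun h => hx.1 (Fin.ext h)) (fun h => hx.2 (Fin.ext h)), zero_mul]

lemma bil_mk {n : ℕ} (hn : n + 2 ≤ k) (s b : F) (t : Fin (k - 2 - n) → F) :
    bil (mkv k F n s) (mkw k F n b t) = 1 + s * b := by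
  rw [bil_mkv (by omega), mkw_at_n (by omega), mkw_at_n1 (by omega)]

lemma one_add_mul_ne (s b : F) (hs : IsSquare s) (hb : b = 0 ∨ ¬ IsSquare (-b)) :
    (1 : F) + s * b ≠ 0 := by
  intro h
  rcases hb with rfl | hb
  · simp at h
  · obtain ⟨r, rfl⟩ := hs
    have hr : r ≠ 0 := by rintro rfl; simp at h
    apply hb
    refine ⟨r⁻¹, ?_⟩
    have hrr : r * r ≠ 0 := mul_ne_zero hr hr
    field_simp
    linear_combination -h

lemma isHVertex_mk {n : ℕ} (hn : n + 2 ≤ k) (s b : F) (hs : IsSquare s)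
    (hb : b = 0 ∨ ¬ IsSquare (-b)) (t : Fin (k - 2 - n) → F) :
    IsHVertex (mkv k F n s, mkw k F n b t) :=
  ⟨isNormal_mkv (by omega) s, isNormal_mkw (by omega) b t, by
    show bil (mkv k F n s) (mkw k F n b t) ≠ 0
    rw [bil_mk hn]
    exact one_add_mul_ne s b hs hb⟩

lemma mkv_inj {n n' : ℕ} (hn : n + 1 < k) (hn' : n' + 1 < k) (s s' : F)
    (h : mkv k F n s = mkv k F n' s') : n = n' ∧ s = s' := by
  have key : ∀ m m' : ℕ, m + 1 < k → (u u' : F) → mkv k F m u = mkv k F m' u' →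
      m < m' → False := by
    intro m m' hm u u' h hlt
    have h0 := congrFun h ⟨m, by omega⟩
    rw [mkv_at_n (by omega), mkv_eq_zero u' _ (by simp; omega) (by simp; omega)] at h0
    exact one_ne_zero h0
  have hnn : n = n' := by
    rcases lt_trichotomy n n' with hlt | heq | hgt
    · exact absurd (key n n' hn s s' h hlt) id
    · exact heq
    · exact absurd (key n' n hn' s' s h.symm hgt) id
  subst hnn
  refine ⟨rfl, ?_⟩
  have h1 := congrFun h ⟨n + 1, hn⟩
  rwa [mkv_at_n1 hn, mkv_at_n1 hn] at h1

lemma mkw_inj {n : ℕ} (hn : n + 2 ≤ k) (b b' : F) (t t' : Fin (k - 2 - n) → F)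
    (h : mkw k F n b t = mkw k F n b' t') : b = b' ∧ t = t' := by
  constructor
  · have h1 := congrFun h ⟨n + 1, by omega⟩
    rwa [mkw_at_n1 (by omega), mkw_at_n1 (by omega)] at h1
  · funext m
    have h2 := congrFun h ⟨n + 2 + (m : ℕ), by have := m.isLt; omega⟩
    rw [mkw_at_tail (by have := m.isLt; omega), mkw_at_tail (by have := m.isLt; omega)] at h2
    simpa using h2

end Construction

section Counting

lemma two_mul_card_squares (F : Type) [Field F] [Fintype F]
    (hodd : Odd (Fintype.card F)) :
    2 * Nat.card {x : F // IsSquare x} = Fintype.card F + 1 := by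
  classical
  have hchar : ringChar F ≠ 2 := by
    intro h
    have h2 := FiniteField.even_card_of_char_two h
    obtain ⟨m, hm⟩ := hodd
    omega
  have htwo : ∀ y : F, y ≠ 0 → y ≠ -y := by
    intro y hy h
    have h2 : (2 : F) = 0 := by
      have hy2 : y * 2 = 0 := by linear_combination h
      rcases mul_eq_zero.mp hy2 with h' | h'
      · exact absurd h' hy
      · exact h'
    have hdvd : ringChar F ∣ 2 := by
      have : ((2 : ℕ) : F) = 0 := by push_cast; exact h2
      exact (ringChar.spec F 2).mp this
    have hp : (ringChar F).Prime := CharP.char_is_prime F (ringChar F)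
    rcases (Nat.Prime.eq_one_or_self_of_dvd Nat.prime_two _ hdvd) with h' | h'
    · exact hp.one_lt.ne' h'
    · exact hchar h'
  set Sq : Finset F := Finset.univ.filter (fun a => IsSquare a) with hSq
  have h0 : (0 : F) ∈ Sq := by simp [hSq]
  have hfib : Fintype.card F = ∑ a ∈ Sq, (Finset.univ.filter (fun x => x * x = a)).card := by
    rw [← Finset.card_univ]
    exact Finset.card_eq_sum_card_fiberwise (fun x _ => by
      simp only [Finset.mem_coe, hSq, Finset.mem_filter, Finset.mem_univ, true_and]; exact ⟨x, rfl⟩)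
  have hcard2 : ∀ a ∈ Sq, a ≠ 0 → (Finset.univ.filter (fun x => x * x = a)).card = 2 := by
    intro a ha h0a
    have hsq : IsSquare a := by simpa [hSq] using ha
    obtain ⟨r, hr⟩ := hsq
    have hr0 : r ≠ 0 := by rintro rfl; rw [mul_zero] at hr; exact h0a hr
    have heq : Finset.univ.filter (fun x => x * x = a) = {r, -r} := by
      ext x
      simp only [Finset.mem_filter, Finset.mem_univ, true_and, Finset.mem_insert,
        Finset.mem_singleton, hr]
      exact mul_self_eq_mul_self_iff
    rw [heq, Finset.card_insert_of_notMem (by simpa using htwo r hr0), Finset.card_singleton]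
  have hzero : (Finset.univ.filter (fun x => x * x = (0 : F))).card = 1 := by
    have : Finset.univ.filter (fun x => x * x = (0 : F)) = {0} := by
      ext x; simp [mul_self_eq_zero]
    rw [this, Finset.card_singleton]
  have hsum : Fintype.card F = 1 + 2 * (Sq.card - 1) := by
    rw [hfib, ← Finset.add_sum_erase _ _ h0, hzero,
      Finset.sum_congr rfl (fun a ha => hcard2 a (Finset.mem_of_mem_erase ha)
        (Finset.ne_of_mem_erase ha)), Finset.sum_const, Finset.card_erase_of_mem h0,
      smul_eq_mul]
    ring
  have hpos : 1 ≤ Sq.card := Finset.card_pos.mpr ⟨0, h0⟩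
  have hct : Nat.card {x : F // IsSquare x} = Sq.card := by
    rw [Nat.card_eq_fintype_card, Fintype.card_subtype]
  omega

lemma card_B_ge (F : Type) [Field F] [Fintype F] (hodd : Odd (Fintype.card F)) :
    Nat.card {x : F // IsSquare x} ≤ Nat.card {x : F // x = 0 ∨ ¬ IsSquare (-x)} := by
  classical
  set Sq : Finset F := Finset.univ.filter (fun a => IsSquare a) with hSq
  set Bf : Finset F := Finset.univ.filter (fun x : F => x = 0 ∨ ¬ IsSquare (-x)) with hBf
  set Cf : Finset F := Finset.univ.filter (fun x : F => ¬ (x = 0 ∨ ¬ IsSquare (-x))) with hCf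
  have h0 : (0 : F) ∈ Sq := by simp [hSq]
  have hsplit : Bf.card + Cf.card = Fintype.card F := by
    rw [hBf, hCf, ← Finset.card_univ]
    exact Finset.card_filter_add_card_filter_not _
  have hinj : Cf.card ≤ (Sq.erase 0).card := by
    apply Finset.card_le_card_of_injOn (fun x => -x)
    · intro x hx
      simp only [Finset.mem_coe, hCf, Finset.mem_filter, Finset.mem_univ, true_and, not_or, not_not] at hx
      simp only [Finset.mem_coe, Finset.mem_erase, hSq, Finset.mem_filter, Finset.mem_univ, true_and]
      exact ⟨neg_ne_zero.mpr hx.1, hx.2⟩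
    · intro a _ b _ hab
      exact neg_injective hab
  have herase : (Sq.erase 0).card = Sq.card - 1 := Finset.card_erase_of_mem h0
  have h2 := two_mul_card_squares F hodd
  have hctA : Nat.card {x : F // IsSquare x} = Sq.card := by
    rw [Nat.card_eq_fintype_card, Fintype.card_subtype]
  have hctB : Nat.card {x : F // x = 0 ∨ ¬ IsSquare (-x)} = Bf.card := by
    rw [Nat.card_eq_fintype_card, Fintype.card_subtype]
  omega

end Counting

lemma sq_sub_one_eq (q : ℕ) (hq : 1 ≤ q) : q ^ 2 - 1 = (q + 1) * (q - 1) := by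
  have := Nat.sq_sub_sq q 1
  simpa using this

lemma geom_key (q m : ℕ) (hq : 1 ≤ q) : (q ^ m - 1) * q + (q - 1) = q ^ (m + 1) - 1 := by
  have h1 : 1 ≤ q ^ m := Nat.one_le_pow _ _ (by omega)
  have h2 : 1 ≤ q ^ (m + 1) := Nat.one_le_pow _ _ (by omega)
  zify [h1, h2, hq]
  push_cast [pow_succ]
  ring

lemma geom_id (q k l : ℕ) (hq : 1 ≤ q) (hl : 1 ≤ l) (hlk : l + 1 ≤ k) :
    (∑ i ∈ Finset.Icc 1 l, (q ^ 2 - 1) * q ^ (k - 1 - i))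
      = (q + 1) * (q ^ l - 1) * q ^ (k - l - 1) := by
  induction l with
  | zero => omega
  | succ m ih =>
    by_cases hm : m = 0
    · subst hm
      rw [Finset.Icc_self, Finset.sum_singleton, sq_sub_one_eq q hq, pow_one]
    · have h1m : 1 ≤ m := by omega
      rw [Finset.sum_Icc_succ_top (by omega : 1 ≤ m + 1), ih h1m (by omega)]
      have e1 : k - 1 - (m + 1) = k - m - 2 := by omega
      have e2 : k - m - 1 = (k - m - 2) + 1 := by omega
      have e3 : k - (m + 1) - 1 = k - m - 2 := by omega
      rw [e1, e2, e3, pow_succ, sq_sub_one_eq q hq]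
      calc (q + 1) * (q ^ m - 1) * (q ^ (k - m - 2) * q) + (q + 1) * (q - 1) * q ^ (k - m - 2)
          = (q + 1) * q ^ (k - m - 2) * ((q ^ m - 1) * q + (q - 1)) := by ring
        _ = (q + 1) * q ^ (k - m - 2) * (q ^ (m + 1) - 1) := by rw [geom_key q m hq]
        _ = (q + 1) * (q ^ (m + 1) - 1) * q ^ (k - m - 2) := by ring


/-- Let `q` be an odd prime power and `1 < l < k - 1`.  Then
`N(H̄_k^q, K_l) ≥ ∑_{i=1}^{l} (q² - 1) q^(k-1-i) / 4 = (q+1)(q^l - 1) q^(k-l-1) / 4`,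
where `K_l` is the complete digraph on `l` vertices (both claims stated multiplied
through by `4`);  i.e., `H̄_k^q` has an induced subdigraph on at least that many
vertices admitting a homomorphism to `K_l` (equivalently, properly `l`-colorable). -/
theorem Nhom_Hkq_compl_Kl_lowerBound (q k l : ℕ) (hq : IsPrimePow q) (hodd : Odd q)
    (hl : 1 < l) (hlk : l < k - 1)
    (F : Type) [Field F] [Fintype F] (hF : Fintype.card F = q) :
    (∑ i ∈ Finset.Icc 1 l, (q ^ 2 - 1) * q ^ (k - 1 - i))
        = (q + 1) * (q ^ l - 1) * q ^ (k - l - 1) ∧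
    (q + 1) * (q ^ l - 1) * q ^ (k - l - 1)
        ≤ 4 * Nhom (digraphCompl (HAdj (k := k) (F := F)))
            (fun a b : Fin l => a ≠ b) := by
  classical
  have hq2 : 2 ≤ q := hq.two_le
  have hk : l + 2 ≤ k := by omega
  have part1 := geom_id q k l (by omega) (by omega) (by omega)
  refine ⟨part1, ?_⟩
  have hoddF : Odd (Fintype.card F) := by rw [hF]; exact hodd
  -- the index type
  set T : Type := Σ i : Fin l, ({x : F // IsSquare x} ×
    {x : F // x = 0 ∨ ¬ IsSquare (-x)} × (Fin (k - 2 - (i : ℕ)) → F)) with hT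
  have hstep : ∀ i : Fin l, (i : ℕ) + 2 ≤ k := fun i => by have := i.isLt; omega
  let g : T → HVtx k F := fun td =>
    ⟨(mkv k F (td.1 : ℕ) td.2.1.val, mkw k F (td.1 : ℕ) td.2.2.1.val td.2.2.2),
      isHVertex_mk (hstep td.1) _ _ td.2.1.2 td.2.2.1.2 _⟩
  have hginj : Function.Injective g := by
    rintro ⟨i, s, b, t⟩ ⟨i', s', b', t'⟩ hxy
    have h := congrArg Subtype.val hxy
    obtain ⟨h1, h2⟩ := Prod.ext_iff.mp h
    obtain ⟨hnn, hss⟩ := mkv_inj (by have := hstep i; omega) (by have := hstep i'; omega) _ _ h1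
    have hii : i = i' := Fin.ext hnn
    subst hii
    obtain ⟨hbb, htt⟩ := mkw_inj (hstep i) _ _ _ _ h2
    have hs2 : s = s' := Subtype.ext hss
    have hb2 : b = b' := Subtype.ext hbb
    subst hs2; subst hb2; subst htt
    rfl
  set S : Set (HVtx k F) := Set.range g with hS
  let f : S → Fin l := fun x => (x.2.choose).1
  have hhom : ∀ x y : S, (digraphCompl (HAdj (k := k) (F := F))) x.val y.val →
      (fun a b : Fin l => a ≠ b) (f x) (f y) := by
    intro x y hxy heq
    obtain ⟨hne, hnadj⟩ := hxy
    apply hnadj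
    refine ⟨hne, ?_⟩
    have hx : g (x.2.choose) = x.val := x.2.choose_spec
    have hy : g (y.2.choose) = y.val := y.2.choose_spec
    have key : ∀ ta tb : T, ta.1 = tb.1 → bil (g ta).val.1 (g tb).val.2 ≠ 0 := by
      rintro ⟨i1, s1, b1, t1⟩ ⟨i2, s2, b2, t2⟩ hiv
      have hi12 : i1 = i2 := hiv
      subst hi12
      show bil (mkv k F (i1 : ℕ) s1.val) (mkw k F (i1 : ℕ) b2.val t2) ≠ 0
      rw [bil_mk (hstep i1)]
      exact one_add_mul_ne _ _ s1.2 b2.2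
    have hb := key (x.2.choose) (y.2.choose) heq
    rw [hx, hy] at hb
    exact hb
  have hmem : Nat.card T ∈ {n | ∃ S : Set (HVtx k F),
      (∃ f : S → Fin l, ∀ x y : S, (digraphCompl (HAdj (k := k) (F := F))) x.val y.val →
        (fun a b : Fin l => a ≠ b) (f x) (f y)) ∧ Nat.card S = n} :=
    ⟨S, ⟨f, hhom⟩, by rw [hS]; exact (Nat.card_congr (Equiv.ofInjective g hginj)).symm⟩
  have hbdd : BddAbove {n | ∃ S : Set (HVtx k F),
      (∃ f : S → Fin l, ∀ x y : S, (digraphCompl (HAdj (k := k) (F := F))) x.val y.val →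
        (fun a b : Fin l => a ≠ b) (f x) (f y)) ∧ Nat.card S = n} := by
    refine ⟨Nat.card (HVtx k F), fun n hn => ?_⟩
    obtain ⟨S', _, rfl⟩ := hn
    exact Nat.card_le_card_of_injective (Subtype.val : S' → HVtx k F) Subtype.val_injective
  have hN : Nat.card T ≤ Nhom (digraphCompl (HAdj (k := k) (F := F)))
      (fun a b : Fin l => a ≠ b) := le_csSup hbdd hmem
  -- counting T
  set cA : ℕ := Nat.card {x : F // IsSquare x} with hcA
  set cB : ℕ := Nat.card {x : F // x = 0 ∨ ¬ IsSquare (-x)} with hcB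
  have hA : 2 * cA = q + 1 := by rw [hcA, two_mul_card_squares F hoddF, hF]
  have hB : cA ≤ cB := card_B_ge F hoddF
  have hcardT : Nat.card T = ∑ i : Fin l, cA * (cB * q ^ (k - 2 - (i : ℕ))) := by
    rw [hT, Nat.card_eq_fintype_card, Fintype.card_sigma]
    refine Finset.sum_congr rfl (fun i _ => ?_)
    rw [hcA, hcB]
    simp only [Nat.card_eq_fintype_card]
    rw [Fintype.card_prod, Fintype.card_prod, Fintype.card_fun, Fintype.card_fin, hF]
  have hpoint : q ^ 2 - 1 ≤ 4 * (cA * cB) := by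
    have h1 : q ^ 2 ≤ (q + 1) * (q + 1) := by nlinarith
    have h2 : (q + 1) * (q + 1) = 4 * (cA * cA) := by rw [← hA]; ring
    have h3 : 4 * (cA * cA) ≤ 4 * (cA * cB) := by
      exact Nat.mul_le_mul_left 4 (Nat.mul_le_mul_left cA hB)
    omega
  calc (q + 1) * (q ^ l - 1) * q ^ (k - l - 1)
      = ∑ i ∈ Finset.Icc 1 l, (q ^ 2 - 1) * q ^ (k - 1 - i) := part1.symm
    _ ≤ ∑ i ∈ Finset.Icc 1 l, (4 * (cA * cB)) * q ^ (k - 1 - i) :=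
        Finset.sum_le_sum (fun i _ => Nat.mul_le_mul_right _ hpoint)
    _ = 4 * ∑ i ∈ Finset.Icc 1 l, cA * (cB * q ^ (k - 1 - i)) := by
        rw [Finset.mul_sum]
        exact Finset.sum_congr rfl (fun i _ => by ring)
    _ = 4 * Nat.card T := by
        rw [hcardT]
        congr 1
        rw [Fin.sum_univ_eq_sum_range (fun i => cA * (cB * q ^ (k - 2 - i))) l,
          ← Finset.Ico_add_one_right_eq_Icc, Finset.sum_Ico_eq_sum_range]
        refine Finset.sum_congr (by rw [Nat.add_sub_cancel]) (fun i hi => ?_)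
        have he : k - 1 - (1 + i) = k - 2 - i := by omega
        rw [he]
    _ ≤ 4 * Nhom (digraphCompl (HAdj (k := k) (F := F))) (fun a b : Fin l => a ≠ b) :=
        Nat.mul_le_mul_left 4 hN
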